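/- Define the marginal density p_t(u) = ∫_Z p_t(u | z) dq(z) and, at points where p_t(u) > 0, the marginal vector field G_t(u) = (∫_Z G_t(u | z) · p_t(u | z) dq(z)) / p_t(u). Then at every (t, u) with p_t(u) > 0 the marginal pair satisfies the continuity equation ∂_t p_t(u) + div_u (p_t · G_t)(u) = 0. -/
import Mathlib


open MeasureTheory

/-- The divergence of a vector field `F : ℝ^d → ℝ^d` at a point `u`:
`div F (u) = ∑ i, ∂F_i/∂x_i (u)`. -/
noncomputable def divergence {d : ℕ} (F : (Fin d → ℝ) → (Fin d → ℝ))
    (u : Fin d → ℝ) : ℝ :=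
  ∑ i : Fin d, fderiv ℝ F u (Pi.single i 1) i

/-- **The marginal probability path and marginal vector field satisfy the continuity
equation.**  Let `(Z, q)` be a probability space, `p_t(·|z)` a family of conditional
probability densities on `ℝ^d` and `G_t(·|z)` a family of conditional vector fields such
that (i) for `q`-a.e. `z` the pair `(p_t(·|z), G_t(·|z))` is `C¹` in `(t,u)` and satisfies
the continuity equation `∂_t p_t(u|z) + div_u (p_t(·|z) G_t(·|z))(u) = 0`; (ii) the time
derivative and the spatial divergence commute with the `z`-integral; (iii) all displayed
integrals are finite.  Define the marginal density `p_t(u) = ∫ p_t(u|z) dq(z)` and, where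
`p_t(u) > 0`, the marginal vector field
`G_t(u) = (∫ G_t(u|z) p_t(u|z) dq(z)) / p_t(u)`.  Then at every `(t,u)` with `p_t(u) > 0`,
`∂_t p_t(u) + div_u (p_t G_t)(u) = 0`. -/
theorem marginal_continuity_equation
    {d : ℕ} (hd : 1 ≤ d)
    {Z : Type*} [MeasurableSpace Z] (q : Measure Z) [IsProbabilityMeasure q]
    (p : ℝ → (Fin d → ℝ) → Z → ℝ)
    (G : ℝ → (Fin d → ℝ) → Z → (Fin d → ℝ))
    (hp_nonneg : ∀ t u z, 0 ≤ p t u z)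
    (hp_prob : ∀ t ∈ Set.Icc (0 : ℝ) 1, ∀ z : Z, ∫ u : Fin d → ℝ, p t u z = 1)
    (hcond : ∀ᵐ z ∂q,
      ContDiff ℝ 1 (fun tu : ℝ × (Fin d → ℝ) => p tu.1 tu.2 z) ∧
      ContDiff ℝ 1 (fun tu : ℝ × (Fin d → ℝ) => G tu.1 tu.2 z) ∧
      ∀ t ∈ Set.Icc (0 : ℝ) 1, ∀ u : Fin d → ℝ,
        deriv (fun s => p s u z) t + divergence (fun x => p t x z • G t x z) u = 0)
    (hcomm_t : ∀ t ∈ Set.Icc (0 : ℝ) 1, ∀ u : Fin d → ℝ,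
      deriv (fun s => ∫ z, p s u z ∂q) t = ∫ z, deriv (fun s => p s u z) t ∂q)
    (hcomm_div : ∀ t ∈ Set.Icc (0 : ℝ) 1, ∀ u : Fin d → ℝ,
      divergence (fun x => ∫ z, p t x z • G t x z ∂q) u
        = ∫ z, divergence (fun x => p t x z • G t x z) u ∂q)
    (hint₁ : ∀ t ∈ Set.Icc (0 : ℝ) 1, ∀ u : Fin d → ℝ,
      Integrable (fun z => p t u z) q)
    (hint₂ : ∀ t ∈ Set.Icc (0 : ℝ) 1, ∀ u : Fin d → ℝ,
      Integrable (fun z => p t u z • G t u z) q)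
    (hint₃ : ∀ t ∈ Set.Icc (0 : ℝ) 1, ∀ u : Fin d → ℝ,
      Integrable (fun z => deriv (fun s => p s u z) t) q)
    (hint₄ : ∀ t ∈ Set.Icc (0 : ℝ) 1, ∀ u : Fin d → ℝ,
      Integrable (fun z => divergence (fun x => p t x z • G t x z) u) q) :
    ∀ t ∈ Set.Icc (0 : ℝ) 1, ∀ u : Fin d → ℝ,
      0 < ∫ z, p t u z ∂q →
      deriv (fun s => ∫ z, p s u z ∂q) t
        + divergence (fun x =>
            (∫ z, p t x z ∂q) •
              ((∫ z, p t x z ∂q)⁻¹ • ∫ z, p t x z • G t x z ∂q)) u = 0 := by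
  intro t ht u _
  have key : (fun x => (∫ z, p t x z ∂q) •
      ((∫ z, p t x z ∂q)⁻¹ • ∫ z, p t x z • G t x z ∂q))
      = fun x => ∫ z, p t x z • G t x z ∂q := by
    funext x
    rcases eq_or_ne (∫ z, p t x z ∂q) 0 with h0 | h0
    · have hze : (fun z => p t x z) =ᵐ[q] 0 :=
        ((integral_eq_zero_iff_of_nonneg (fun z => hp_nonneg t x z)
          (hint₁ t ht x)).mp h0)
      have : ∫ z, p t x z • G t x z ∂q = 0 := by
        rw [integral_eq_zero_iff_of_nonneg] at h0
        · refine integral_eq_zero_of_ae ?_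
          filter_upwards [hze] with z hz
          simp [Pi.zero_apply] at hz
          simp [hz]
        · exact fun z => hp_nonneg t x z
        · exact hint₁ t ht x
      rw [h0, this, zero_smul]
    · rw [smul_inv_smul₀ h0]
  rw [key, hcomm_div t ht u, hcomm_t t ht u,
    ← integral_add (hint₃ t ht u) (hint₄ t ht u)]
  have : (fun z => deriv (fun s => p s u z) t
      + divergence (fun x => p t x z • G t x z) u) =ᵐ[q] 0 := by
    filter_upwards [hcond] with z hz
    exact hz.2.2 t ht u
  rw [integral_eq_zero_of_ae this]
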